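/- Let (θ, S, X) be an ample dynamical system and (π, σ) a covariant representation on a vector space V. Define for each s ∈ S a map π_s(f δ_s) = π(f) σ_s for f ∈ L_c(X_{ss*}). Then {π_s}_{s∈S} is a non-degenerate representation of the semi-direct product Fell bundle B^θ on V; in particular π_{st}(μ_{s,t}(f δ_s ⊗ g δ_t)) = π_s(f δ_s) π_t(g δ_t) and π_t ∘ j_{t,s} = π_s whenever s ≤ t. -/

import Mathlib

/-- An inverse semigroup: a semigroup with an involution `star` such that
`a (star a) a = a`, `(star a) a (star a) = star a`, and idempotents commute. -/
class InverseSemigroup (S : Type*) extends Semigroup S, Star S where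
  star_star : ∀ a : S, star (star a) = a
  mul_star_mul : ∀ a : S, a * star a * a = a
  star_mul_star : ∀ a : S, star a * a * star a = star a
  star_mul : ∀ a b : S, star (a * b) = star b * star a
  idem_comm : ∀ e f : S, e * e = e → f * f = f → e * f = f * e

/-- The natural partial order on an inverse semigroup: `s ≤ t` iff `s = t e`
for some idempotent `e`. -/
def ISle {S : Type*} [InverseSemigroup S] (s t : S) : Prop :=
  ∃ e : S, e * e = e ∧ s = t * e

/-- An ample action of an inverse semigroup `S` on a topological space `X`:
a semigroup homomorphism `s ↦ θ s` into partial homeomorphisms between clopen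
subsets of `X` (composition with largest domains encoded via
`PartialEquiv.trans` and `EqOnSource`), with `θ (star s) = (θ s).symm`, whose
domains cover `X`.  (For an ample dynamical system, `X` is moreover assumed
locally compact, Hausdorff and totally disconnected.) -/
structure AmpleSystem (S X : Type*) [InverseSemigroup S] [TopologicalSpace X] where
  θ : S → PartialHomeomorph X X
  hom : ∀ s t : S, (θ (s * t)).toPartialEquiv.EqOnSource
    ((θ t).toPartialEquiv.trans (θ s).toPartialEquiv)
  star_eq : ∀ s : S, (θ (star s)).toPartialEquiv.EqOnSource (θ s).toPartialEquiv.symm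
  clopen : ∀ s : S, IsClopen (θ s).source
  cover : ∀ x : X, ∃ s : S, x ∈ (θ s).source

variable (K : Type*) [Field K]

/-- `L_c(X)`: the locally constant, compactly supported `K`-valued functions
on `X` (a non-unital commutative `K`-algebra under pointwise operations). -/
def LcSet (X : Type*) [TopologicalSpace X] : Set (X → K) :=
  {f | IsLocallyConstant f ∧ HasCompactSupport f}

variable {S X : Type*} [InverseSemigroup S] [TopologicalSpace X]

/-- The globally defined endomorphism `ᾱ_s` of `L_c(X)`:
`ᾱ_s(f) = α_s(f · 1_{X_{s*s}})`, i.e. `(ᾱ_s f)(x) = f (θ_{s*} x)` for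
`x ∈ X_{s s*}` and `0` otherwise. -/
noncomputable def barAlpha (T : AmpleSystem S X) (s : S) (f : X → K) : X → K :=
  (T.θ s).target.indicator (fun x => f ((T.θ s).symm x))

/-- The fiber `B_s = L_c(X_{s s*})` of the semi-direct product bundle:
elements of `L_c(X)` vanishing outside `X_{s s*} = ran θ_s`. -/
def FibSet (T : AmpleSystem S X) (s : S) : Set (X → K) :=
  {f | f ∈ LcSet K X ∧ ∀ x ∉ (T.θ s).target, f x = 0}

/-- `L_c(X_e)` for an idempotent `e`: elements of `L_c(X)` vanishing outside
`X_e = dom θ_e`. -/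
def LcE (T : AmpleSystem S X) (e : S) : Set (X → K) :=
  {f | f ∈ LcSet K X ∧ ∀ x ∉ (T.θ e).source, f x = 0}

/-- A covariant representation `(π, σ)` of an ample dynamical system
`(θ, S, X)` on a `K`-vector space `V`: a non-degenerate representation `π` of
`L_c(X)` and a semigroup homomorphism `σ : S → End(V)` with
`π (α_s f) = σ_s π(f) σ_{s*}` for `f ∈ L_c(X_{s*s})`, and
`span {π(f) ξ : f ∈ L_c(X_e)} = σ_e(V)` for each idempotent `e`.
(`π` is recorded as a map on all of `X → K`; only its values on `L_c(X)` are
constrained.) -/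
structure CovRep (T : AmpleSystem S X) (V : Type*) [AddCommGroup V]
    [Module K V] where
  π : (X → K) → Module.End K V
  σ : S → Module.End K V
  π_add : ∀ f ∈ LcSet K X, ∀ g ∈ LcSet K X, π (f + g) = π f + π g
  π_smul : ∀ (c : K), ∀ f ∈ LcSet K X, π (c • f) = c • π f
  π_mul : ∀ f ∈ LcSet K X, ∀ g ∈ LcSet K X, π (f * g) = π f * π g
  π_nondeg : Submodule.span K {ξ : V | ∃ f ∈ LcSet K X, ∃ η : V, ξ = π f η} = ⊤
  σ_hom : ∀ s t : S, σ (s * t) = σ s * σ t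
  covariant : ∀ s : S, ∀ f ∈ LcE K T (star s * s),
    π (barAlpha K T s f) = σ s * π f * σ (star s)
  essential : ∀ e : S, e * e = e →
    Submodule.span K {ξ : V | ∃ f ∈ LcE K T e, ∃ η : V, ξ = π f η} =
      LinearMap.range (σ e)


namespace CovrepAux

open InverseSemigroup in
theorem inv_unique {S : Type*} [InverseSemigroup S] {a b c : S}
    (h1 : a * b * a = a) (h2 : b * a * b = b)
    (h3 : a * c * a = a) (h4 : c * a * c = c) : b = c := by
  have hba : (b * a) * (b * a) = b * a := by
    calc (b * a) * (b * a) = (b * a * b) * a := by simp only [mul_assoc]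
    _ = b * a := by rw [h2]
  have hca : (c * a) * (c * a) = c * a := by
    calc (c * a) * (c * a) = (c * a * c) * a := by simp only [mul_assoc]
    _ = c * a := by rw [h4]
  have hab : (a * b) * (a * b) = a * b := by
    calc (a * b) * (a * b) = (a * b * a) * b := by simp only [mul_assoc]
    _ = a * b := by rw [h1]
  have hac : (a * c) * (a * c) = a * c := by
    calc (a * c) * (a * c) = (a * c * a) * c := by simp only [mul_assoc]
    _ = a * c := by rw [h3]
  have hb : b = c * (a * b) := by
    calc b = b * a * b := h2.symm
    _ = (b * (a * c * a)) * b := by rw [h3]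
    _ = (b * a) * (c * a) * b := by simp only [mul_assoc]
    _ = (c * a) * (b * a) * b := by rw [idem_comm _ _ hba hca]
    _ = c * (a * (b * a * b)) := by simp only [mul_assoc]
    _ = c * (a * b) := by rw [h2]
  have hc : c = c * (a * b) := by
    calc c = c * a * c := h4.symm
    _ = (c * (a * b * a)) * c := by rw [h1]
    _ = c * ((a * b) * (a * c)) := by simp only [mul_assoc]
    _ = c * ((a * c) * (a * b)) := by rw [idem_comm _ _ hab hac]
    _ = (c * a * c) * (a * b) := by simp only [mul_assoc]
    _ = c * (a * b) := by rw [h4]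
  rw [hb, ← hc]

open InverseSemigroup in
theorem star_idem {S : Type*} [InverseSemigroup S] {e : S} (he : e * e = e) :
    star e = e :=
  inv_unique (mul_star_mul e) (star_mul_star e) (by rw [he, he]) (by rw [he, he])

open InverseSemigroup in
theorem star_mul_self_idem {S : Type*} [InverseSemigroup S] (s : S) :
    (star s * s) * (star s * s) = star s * s := by
  calc (star s * s) * (star s * s) = star s * (s * star s * s) := by simp only [mul_assoc]
  _ = star s * s := by rw [mul_star_mul]

open InverseSemigroup in
theorem mul_star_self_idem {S : Type*} [InverseSemigroup S] (s : S) :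
    (s * star s) * (s * star s) = s * star s := by
  calc (s * star s) * (s * star s) = (s * star s * s) * star s := by simp only [mul_assoc]
  _ = s * star s := by rw [mul_star_mul]

open InverseSemigroup in
theorem le_absorb {S : Type*} [InverseSemigroup S] {s t e : S} (he : e * e = e)
    (hse : s = t * e) : s * star s * t = s := by
  subst hse
  have h1 : star (t * e) = e * star t := by rw [InverseSemigroup.star_mul, star_idem he]
  rw [h1]
  have h2 : (star t * t) * (star t * t) = star t * t := star_mul_self_idem t
  calc t * e * (e * star t) * t = t * ((e * e) * (star t * t)) := by simp only [mul_assoc]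
  _ = t * (e * (star t * t)) := by rw [he]
  _ = t * ((star t * t) * e) := by rw [idem_comm _ _ he h2]
  _ = (t * star t * t) * e := by simp only [mul_assoc]
  _ = t * e := by rw [mul_star_mul]

section Theta

variable {S X : Type*} [InverseSemigroup S] [TopologicalSpace X] (T : AmpleSystem S X)

theorem source_star (s : S) : (T.θ (star s)).source = (T.θ s).target :=
  PartialEquiv.EqOnSource.source_eq (T.star_eq s)

theorem target_star (s : S) : (T.θ (star s)).target = (T.θ s).source :=
  PartialEquiv.EqOnSource.target_eq (T.star_eq s)

theorem star_apply {s : S} {x : X} (hx : x ∈ (T.θ s).target) :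
    T.θ (star s) x = (T.θ s).symm x := by
  have := PartialEquiv.EqOnSource.eqOn (T.star_eq s)
  rw [source_star] at this
  exact this hx

theorem source_star_mul (s : S) : (T.θ (star s * s)).source = (T.θ s).source := by
  have h := PartialEquiv.EqOnSource.source_eq (T.hom (star s) s)
  rw [PartialEquiv.trans_source] at h
  rw [h, source_star]
  ext x
  simp only [Set.mem_inter_iff, Set.mem_preimage, OpenPartialHomeomorph.coe_toPartialEquiv,
    and_iff_left_iff_imp]
  exact fun hx => (T.θ s).map_source hx

theorem source_mul_star (s : S) : (T.θ (s * star s)).source = (T.θ s).target := by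
  have h := PartialEquiv.EqOnSource.source_eq (T.hom s (star s))
  rw [PartialEquiv.trans_source] at h
  rw [h, source_star]
  ext x
  simp only [Set.mem_inter_iff, Set.mem_preimage, OpenPartialHomeomorph.coe_toPartialEquiv,
    and_iff_left_iff_imp]
  intro hx
  show T.θ (star s) x ∈ _
  rw [star_apply T hx]
  exact (T.θ s).map_target hx

theorem idem_source_eq_target {e : S} (he : e * e = e) (hst : star e = e) :
    (T.θ e).target = (T.θ e).source := by
  conv_lhs => rw [← hst]
  rw [target_star, ← source_star_mul T e, hst, he]

theorem idem_apply {e : S} (he : e * e = e) (hst : star e = e) {x : X}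
    (hx : x ∈ (T.θ e).source) : T.θ e x = x := by
  have heq := PartialEquiv.EqOnSource.eqOn (T.hom e e)
  rw [he] at heq
  have h1 : T.θ e x = T.θ e (T.θ e x) := heq hx
  have h2 : T.θ e x ∈ (T.θ e).source := by
    rw [← idem_source_eq_target T he hst]; exact (T.θ e).map_source hx
  exact ((T.θ e).injOn (h1 ▸ h2) hx h1.symm)

theorem idem_symm_apply {e : S} (he : e * e = e) (hst : star e = e) {x : X}
    (hx : x ∈ (T.θ e).target) : (T.θ e).symm x = x := by
  have h1 : (T.θ e).symm x ∈ (T.θ e).source := (T.θ e).map_target hx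
  have h2 : T.θ e ((T.θ e).symm x) = x := (T.θ e).right_inv hx
  rw [idem_apply T he hst h1] at h2
  exact h2

theorem symm_star_apply {s : S} {x : X} (hx : x ∈ (T.θ s).source) :
    (T.θ (star s)).symm x = T.θ s x := by
  have h := PartialEquiv.EqOnSource.eqOn (PartialEquiv.EqOnSource.symm' (T.star_eq s))
  have hx' : x ∈ (T.θ (star s)).target := by rw [target_star]; exact hx
  have := h (x := x) (by simpa using hx')
  simpa using this

theorem target_clopen (s : S) : IsClopen (T.θ s).target :=
  source_star T s ▸ T.clopen (star s)

end Theta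

section Lc

variable {K X : Type*} [Field K] [TopologicalSpace X]

theorem Lc_zero : (0 : X → K) ∈ LcSet K X := by
  constructor
  · exact IsLocallyConstant.const 0
  · rw [HasCompactSupport, tsupport, Function.support_zero]
    simp [isCompact_empty]

theorem Lc_add {f g : X → K} (hf : f ∈ LcSet K X) (hg : g ∈ LcSet K X) :
    f + g ∈ LcSet K X :=
  ⟨hf.1.comp₂ hg.1 (· + ·), hf.2.add hg.2⟩

theorem Lc_indicator {U : Set X} (hU : IsClopen U) {f : X → K} (hf : f ∈ LcSet K X) :
    U.indicator f ∈ LcSet K X := by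
  constructor
  · rw [IsLocallyConstant.iff_exists_open]
    intro x
    by_cases hx : x ∈ U
    · obtain ⟨W, hW, hxW, hWf⟩ := hf.1.exists_open x
      refine ⟨U ∩ W, hU.isOpen.inter hW, ⟨hx, hxW⟩, fun y hy => ?_⟩
      rw [Set.indicator_of_mem hy.1, Set.indicator_of_mem hx, hWf y hy.2]
    · refine ⟨Uᶜ, hU.compl.isOpen, hx, fun y hy => ?_⟩
      rw [Set.indicator_of_notMem hy, Set.indicator_of_notMem hx]
  · exact hf.2.mono (by rw [Set.support_indicator]; exact Set.inter_subset_right)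

end Lc

section BA

variable {K S X : Type*} [Field K] [InverseSemigroup S] [TopologicalSpace X]
  (T : AmpleSystem S X)

theorem barAlpha_mem (s : S) {f : X → K} (hf : f ∈ LcSet K X)
    (hsupp : ∀ x ∉ (T.θ s).source, f x = 0) :
    barAlpha K T s f ∈ LcSet K X := by
  rw [barAlpha]
  set h : X → K := (T.θ s).target.indicator (fun x => f ((T.θ s).symm x)) with hh
  have htc : IsClopen (T.θ s).target := target_clopen T s
  have hco : ContinuousOn (T.θ s).symm (T.θ s).target := (T.θ s).continuousOn_symm
  constructor
  · rw [IsLocallyConstant.iff_exists_open]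
    intro x
    by_cases hx : x ∈ (T.θ s).target
    · obtain ⟨W, hW, hxW, hWf⟩ := hf.1.exists_open ((T.θ s).symm x)
      refine ⟨(T.θ s).target ∩ (T.θ s).symm ⁻¹' W,
        hco.isOpen_inter_preimage htc.isOpen hW, ⟨hx, hxW⟩, fun y hy => ?_⟩
      rw [hh]
      rw [Set.indicator_of_mem hy.1, Set.indicator_of_mem hx]
      exact hWf _ hy.2
    · refine ⟨(T.θ s).targetᶜ, htc.compl.isOpen, hx, fun y hy => ?_⟩
      rw [hh, Set.indicator_of_notMem hy, Set.indicator_of_notMem hx]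
  · have hK0 : tsupport f ⊆ (T.θ s).source := by
      apply closure_minimal _ (T.clopen s).isClosed
      intro x hx
      by_contra hxs
      exact hx (hsupp x hxs)
    have hC' : IsCompact ((T.θ s) '' tsupport f) :=
      hf.2.image_of_continuousOn ((T.θ s).continuousOn.mono hK0)
    set C : Set X := (T.θ s).target ∩ (T.θ s).symm ⁻¹' (tsupport f) with hCdef
    have hCclosed : IsClosed C :=
      hco.preimage_isClosed_of_isClosed htc.isClosed (isClosed_tsupport f)
    have hCsub : C ⊆ (T.θ s) '' tsupport f := by
      rintro x ⟨hx1, hx2⟩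
      exact ⟨(T.θ s).symm x, hx2, (T.θ s).right_inv hx1⟩
    have hCcomp : IsCompact C := hC'.of_isClosed_subset hCclosed hCsub
    have hsup : Function.support h ⊆ C := by
      intro x hx
      rw [Function.mem_support, hh] at hx
      have hxt : x ∈ (T.θ s).target := by
        by_contra hc
        exact hx (Set.indicator_of_notMem hc _)
      rw [Set.indicator_of_mem hxt] at hx
      exact ⟨hxt, subset_closure hx⟩
    exact hCcomp.of_isClosed_subset (isClosed_tsupport h) (closure_minimal hsup hCclosed)

/-- `ᾱ_e` is the identity on `L_c(X_e)` for an idempotent `e`. -/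
theorem barAlpha_idem {e : S} (he : e * e = e) {h : X → K}
    (hsupp : ∀ x ∉ (T.θ e).source, h x = 0) : barAlpha K T e h = h := by
  have hst : star e = e := star_idem he
  funext x
  rw [barAlpha]
  by_cases hx : x ∈ (T.θ e).target
  · rw [Set.indicator_of_mem hx, idem_symm_apply T he hst hx]
  · rw [Set.indicator_of_notMem hx]
    refine (hsupp x ?_).symm
    rw [← idem_source_eq_target T he hst]
    exact hx

/-- `ᾱ_s g` only depends on the restriction of `g` to `X_{s* s}`. -/
theorem barAlpha_indicator (s : S) (g : X → K) :
    barAlpha K T s g =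
      barAlpha K T s ((T.θ (star s * s)).source.indicator g) := by
  funext x
  rw [barAlpha, barAlpha]
  by_cases hx : x ∈ (T.θ s).target
  · rw [Set.indicator_of_mem hx, Set.indicator_of_mem hx]
    have : (T.θ s).symm x ∈ (T.θ (star s * s)).source := by
      rw [source_star_mul]
      exact (T.θ s).map_target hx
    rw [Set.indicator_of_mem this]
  · rw [Set.indicator_of_notMem hx, Set.indicator_of_notMem hx]

/-- `ᾱ_s (ᾱ_{s*} f) = f` for `f` supported in `X_{s s*}`. -/
theorem barAlpha_barAlpha_star {s : S} {f : X → K}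
    (hsupp : ∀ x ∉ (T.θ s).target, f x = 0) :
    barAlpha K T s (barAlpha K T (star s) f) = f := by
  funext x
  rw [barAlpha, barAlpha]
  by_cases hx : x ∈ (T.θ s).target
  · rw [Set.indicator_of_mem hx]
    have hy : (T.θ s).symm x ∈ (T.θ s).source := (T.θ s).map_target hx
    have hyt : (T.θ s).symm x ∈ (T.θ (star s)).target := by
      rw [target_star]; exact hy
    rw [Set.indicator_of_mem hyt, symm_star_apply T hy, (T.θ s).right_inv hx]
  · rw [Set.indicator_of_notMem hx]
    exact (hsupp x hx).symm

end BA
end CovrepAux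


namespace CovrepAux

section Rep

variable {K S X : Type*} [Field K] [InverseSemigroup S] [TopologicalSpace X]
  {T : AmpleSystem S X} {V : Type*} [AddCommGroup V] [Module K V]
  (ρ : CovRep K T V)

theorem pi_zero : ρ.π 0 = 0 := by
  have h := ρ.π_add 0 Lc_zero 0 Lc_zero
  rw [add_zero] at h
  exact (left_eq_add.mp h)

theorem sigma_idem {e : S} (he : e * e = e) : ρ.σ e * ρ.σ e = ρ.σ e := by
  rw [← ρ.σ_hom, he]

theorem pi_LcE {e : S} (he : e * e = e) {h : X → K} (hh : h ∈ LcE K T e) :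
    ρ.π h = ρ.σ e * ρ.π h * ρ.σ e := by
  have hst : star e = e := star_idem he
  have hmem : h ∈ LcE K T (star e * e) := by rw [hst, he]; exact hh
  have hcov := ρ.covariant e h hmem
  rw [barAlpha_idem T he hh.2, hst] at hcov
  exact hcov

theorem sigma_pi {e : S} (he : e * e = e) {h : X → K} (hh : h ∈ LcE K T e) :
    ρ.σ e * ρ.π h = ρ.π h := by
  conv_lhs => rw [pi_LcE ρ he hh]
  rw [show ρ.σ e * (ρ.σ e * ρ.π h * ρ.σ e) = (ρ.σ e * ρ.σ e) * ρ.π h * ρ.σ e by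
    simp only [mul_assoc], sigma_idem ρ he, ← pi_LcE ρ he hh]

theorem pi_sigma {e : S} (he : e * e = e) {h : X → K} (hh : h ∈ LcE K T e) :
    ρ.π h * ρ.σ e = ρ.π h := by
  conv_lhs => rw [pi_LcE ρ he hh]
  rw [show ρ.σ e * ρ.π h * ρ.σ e * ρ.σ e = ρ.σ e * ρ.π h * (ρ.σ e * ρ.σ e) by
    simp only [mul_assoc], sigma_idem ρ he, ← pi_LcE ρ he hh]

/-- For `f ∈ B_s`, `π(f) σ_s = σ_s π(ᾱ_{s*} f)`. -/
theorem pi_fib_sigma {s : S} {f : X → K} (hf : f ∈ FibSet K T s) :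
    ρ.π f * ρ.σ s = ρ.σ s * ρ.π (barAlpha K T (star s) f) := by
  have hfLc : f ∈ LcSet K X := hf.1
  have hfv : ∀ x ∉ (T.θ s).target, f x = 0 := hf.2
  have hmss : f ∈ LcE K T (s * star s) :=
    ⟨hfLc, by rw [source_mul_star]; exact hfv⟩
  have hmem1 : f ∈ LcE K T (star (star s) * star s) := by
    rw [InverseSemigroup.star_star]; exact hmss
  have cov1 := ρ.covariant (star s) f hmem1
  rw [InverseSemigroup.star_star] at cov1
  set f' : X → K := barAlpha K T (star s) f with hf'
  have hf'v : ∀ x ∉ (T.θ (star s * s)).source, f' x = 0 := by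
    intro x hx
    rw [source_star_mul, ← target_star] at hx
    exact Set.indicator_of_notMem hx _
  have hf'Lc : f' ∈ LcSet K X := by
    apply barAlpha_mem T (star s) hfLc
    intro x hx
    rw [source_star] at hx
    exact hfv x hx
  have hf'mem : f' ∈ LcE K T (star s * s) := ⟨hf'Lc, hf'v⟩
  have cov2 := ρ.covariant s f' hf'mem
  rw [barAlpha_barAlpha_star T hfv] at cov2
  rw [cov2, mul_assoc, mul_assoc, ← ρ.σ_hom,
    pi_sigma ρ (star_mul_self_idem s) hf'mem]

theorem f'_Lc {s : S} {f : X → K} (hf : f ∈ FibSet K T s) :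
    barAlpha K T (star s) f ∈ LcSet K X := by
  apply barAlpha_mem T (star s) hf.1
  intro x hx
  rw [source_star] at hx
  exact hf.2 x hx

end Rep
end CovrepAux

/-- Integration.  If `(π, σ)` is a covariant representation of an
ample dynamical system on `V`, then the maps `π_s (f δ_s) := π(f) σ_s`
(for `f ∈ L_c(X_{s s*})`) form a non-degenerate representation of the
semi-direct product bundle `B^θ` on `V`: each `π_s` is linear (automatic from
the recorded linearity of `π`), multiplicativity
`π_{s t}(μ_{s,t}(f δ_s ⊗ g δ_t)) = π_s(f δ_s) π_t(g δ_t)` holds — where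
`μ_{s,t}(f δ_s ⊗ g δ_t) = f · ᾱ_s(g) δ_{s t}` — the maps are compatible with
the inclusions `j`, i.e. `π_t ∘ j_{t,s} = π_s` for `s ≤ t`, and the family is
non-degenerate. -/
theorem covrep_integration
    {K S X : Type*} [Field K] [InverseSemigroup S] [TopologicalSpace X]
    (T : AmpleSystem S X) {V : Type*} [AddCommGroup V] [Module K V]
    (ρ : CovRep K T V) :
    (∀ s t : S, ∀ f ∈ FibSet K T s, ∀ g ∈ FibSet K T t,
      ρ.π (f * barAlpha K T s g) * ρ.σ (s * t) =
        (ρ.π f * ρ.σ s) * (ρ.π g * ρ.σ t)) ∧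
    (∀ s t : S, ISle s t → ∀ f ∈ FibSet K T s,
      ρ.π f * ρ.σ t = ρ.π f * ρ.σ s) ∧
    Submodule.span K {ξ : V | ∃ (s : S), ∃ f ∈ FibSet K T s, ∃ η : V,
      ξ = (ρ.π f * ρ.σ s) η} = ⊤ := by
  open CovrepAux in
  refine ⟨?_, ?_, ?_⟩
  · -- multiplicativity
    intro s t f hf g hg
    set e := star s * s with he_def
    have he : e * e = e := star_mul_self_idem s
    set g₁ : X → K := (T.θ e).source.indicator g with hg₁def
    have hg₁Lc : g₁ ∈ LcSet K X := Lc_indicator (T.clopen e) hg.1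
    have hg₁mem : g₁ ∈ LcE K T e :=
      ⟨hg₁Lc, fun x hx => Set.indicator_of_notMem hx g⟩
    have hbag : barAlpha K T s g = barAlpha K T s g₁ := barAlpha_indicator T s g
    have hbaLc : barAlpha K T s g₁ ∈ LcSet K X := by
      apply barAlpha_mem T s hg₁Lc
      intro x hx
      apply Set.indicator_of_notMem
      rw [source_star_mul]
      exact hx
    have cov := ρ.covariant s g₁ hg₁mem
    -- the left-hand side
    have key1 : ρ.π (f * barAlpha K T s g) * ρ.σ (s * t) =
        ρ.π f * (ρ.σ s * (ρ.π g₁ * ρ.σ t)) := by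
      rw [hbag, ρ.π_mul f hf.1 _ hbaLc, cov, ρ.σ_hom s t]
      simp only [mul_assoc]
      rw [← mul_assoc (ρ.σ (star s)) (ρ.σ s) (ρ.σ t), ← ρ.σ_hom (star s) s,
        ← mul_assoc (ρ.π g₁), pi_sigma ρ he hg₁mem]
    -- the right-hand side
    set g₂ : X → K := ((T.θ e).source)ᶜ.indicator g with hg₂def
    have hg₂Lc : g₂ ∈ LcSet K X := Lc_indicator (T.clopen e).compl hg.1
    have hsplit : g = g₁ + g₂ := by
      funext x
      by_cases hx : x ∈ (T.θ e).source
      · simp [hg₁def, hg₂def, Set.indicator_of_mem hx,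
          Set.indicator_of_notMem (by simpa using hx : x ∉ ((T.θ e).source)ᶜ)]
      · simp [hg₁def, hg₂def, Set.indicator_of_notMem hx,
          Set.indicator_of_mem (by simpa using hx : x ∈ ((T.θ e).source)ᶜ)]
    set f' : X → K := barAlpha K T (star s) f with hf'def
    have hf'Lc : f' ∈ LcSet K X := f'_Lc hf
    have hf'g₂ : f' * g₂ = 0 := by
      funext x
      by_cases hx : x ∈ (T.θ e).source
      · have : g₂ x = 0 :=
          Set.indicator_of_notMem (by simpa using hx : x ∉ ((T.θ e).source)ᶜ) g
        simp [Pi.mul_apply, this]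
      · have hx' : x ∉ (T.θ (star s)).target := by
          rw [target_star, ← source_star_mul T s]
          exact hx
        have : f' x = 0 := Set.indicator_of_notMem hx' _
        simp [Pi.mul_apply, this]
    have hzero : ρ.π f * ρ.σ s * ρ.π g₂ = 0 := by
      rw [pi_fib_sigma ρ hf, mul_assoc, ← ρ.π_mul _ hf'Lc _ hg₂Lc, hf'g₂,
        pi_zero ρ, mul_zero]
    have key2 : (ρ.π f * ρ.σ s) * (ρ.π g * ρ.σ t) =
        ρ.π f * (ρ.σ s * (ρ.π g₁ * ρ.σ t)) := by
      rw [hsplit, ρ.π_add g₁ hg₁Lc g₂ hg₂Lc, add_mul, mul_add,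
        ← mul_assoc (ρ.π f * ρ.σ s) (ρ.π g₂) (ρ.σ t), hzero, zero_mul, add_zero]
      simp only [mul_assoc]
    rw [key1, key2]
  · -- compatibility with inclusions
    intro s t hle f hf
    obtain ⟨e', he', hse⟩ := hle
    have habs : s * star s * t = s := le_absorb he' hse
    have hmss : (s * star s) * (s * star s) = s * star s := mul_star_self_idem s
    have hfmem : f ∈ LcE K T (s * star s) :=
      ⟨hf.1, by rw [source_mul_star]; exact hf.2⟩
    calc ρ.π f * ρ.σ t = (ρ.π f * ρ.σ (s * star s)) * ρ.σ t := by
          rw [pi_sigma ρ hmss hfmem]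
      _ = ρ.π f * ρ.σ (s * star s * t) := by rw [mul_assoc, ← ρ.σ_hom]
      _ = ρ.π f * ρ.σ s := by rw [habs]
  · -- non-degeneracy
    classical
    set M : Set V := {ξ : V | ∃ (s : S), ∃ f ∈ FibSet K T s, ∃ η : V,
      ξ = (ρ.π f * ρ.σ s) η} with hM
    have main : ∀ (F : Finset S) (f : X → K), f ∈ LcSet K X →
        (∀ x, f x ≠ 0 → x ∈ ⋃ a ∈ F, (T.θ a).source) → ∀ η : V,
        ρ.π f η ∈ Submodule.span K M := by
      intro F
      induction F using Finset.induction_on with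
      | empty =>
        intro f hfLc hsupp η
        have hf0 : f = 0 := by
          funext x
          by_contra hx
          simpa using hsupp x hx
        rw [hf0, pi_zero ρ]
        simp
      | @insert a F ha IH =>
        intro f hfLc hsupp η
        set f₁ : X → K := (T.θ a).source.indicator f with hf₁def
        set f₂ : X → K := ((T.θ a).source)ᶜ.indicator f with hf₂def
        have hf₁Lc : f₁ ∈ LcSet K X := Lc_indicator (T.clopen a) hfLc
        have hf₂Lc : f₂ ∈ LcSet K X := Lc_indicator (T.clopen a).compl hfLc
        have hsplit : f = f₁ + f₂ := by
          funext x
          by_cases hx : x ∈ (T.θ a).source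
          · simp [hf₁def, hf₂def, Set.indicator_of_mem hx,
              Set.indicator_of_notMem (by simpa using hx : x ∉ ((T.θ a).source)ᶜ)]
          · simp [hf₁def, hf₂def, Set.indicator_of_notMem hx,
              Set.indicator_of_mem (by simpa using hx : x ∈ ((T.θ a).source)ᶜ)]
        have hπ : ρ.π f η = ρ.π f₁ η + ρ.π f₂ η := by
          rw [hsplit, ρ.π_add f₁ hf₁Lc f₂ hf₂Lc]
          rfl
        rw [hπ]
        apply Submodule.add_mem
        · -- first summand is a generator
          set e := star a * a with he_def
          have he : e * e = e := star_mul_self_idem a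
          have hst : star e = e := star_idem he
          have hv : ∀ x ∉ (T.θ e).source, f₁ x = 0 := by
            intro x hx
            rw [source_star_mul] at hx
            exact Set.indicator_of_notMem hx f
          have hf₁mem : f₁ ∈ LcE K T e := ⟨hf₁Lc, hv⟩
          have hf₁fib : f₁ ∈ FibSet K T e := by
            refine ⟨hf₁Lc, fun x hx => ?_⟩
            apply hv
            rw [← idem_source_eq_target T he hst]
            exact hx
          have : ρ.π f₁ η = (ρ.π f₁ * ρ.σ e) η := by
            rw [pi_sigma ρ he hf₁mem]
          rw [this]
          exact Submodule.subset_span ⟨e, f₁, hf₁fib, η, rfl⟩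
        · -- second summand handled by the induction hypothesis
          apply IH f₂ hf₂Lc
          intro x hx
          have hxc : x ∈ ((T.θ a).source)ᶜ := by
            by_contra hc
            exact hx (Set.indicator_of_notMem hc f)
          have hfx : f x ≠ 0 := by
            intro h0
            apply hx
            rw [hf₂def, Set.indicator_apply]
            split <;> simp [h0]
          have := hsupp x hfx
          simp only [Finset.mem_insert, Set.mem_iUnion, exists_prop] at this ⊢
          obtain ⟨b, hb1 | hb1, hb2⟩ := this
          · exact absurd (hb1 ▸ hb2) (by simpa using hxc)
          · exact ⟨b, hb1, hb2⟩
    apply le_antisymm le_top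
    rw [← ρ.π_nondeg]
    rw [Submodule.span_le]
    rintro ξ ⟨f, hfLc, η, rfl⟩
    have hcover : tsupport f ⊆ ⋃ s : S, (T.θ s).source := by
      intro x _
      obtain ⟨s, hs⟩ := T.cover x
      exact Set.mem_iUnion.2 ⟨s, hs⟩
    obtain ⟨F, hF⟩ := hfLc.2.elim_finite_subcover (fun s : S => (T.θ s).source)
      (fun s => (T.clopen s).isOpen) hcover
    exact main F f hfLc (fun x hx => hF (subset_closure hx)) η
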